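/- Consider the power network with controllable loads: let η : ℝ → ℝ^m, ω_g : ℝ → ℝ^{n_g} be differentiable and, with continuous inputs P_m : ℝ → ℝ^{n_g} and u_l : ℝ → ℝ^{n_l}, satisfy for all t: η̇(t) = B_gᵀω_g(t) + B_lᵀω_l(t) and M ω̇_g(t) = −D_g ω_g(t) − B_g Γ sin(η(t)) + P_m(t), where ω_l(t) = D_l⁻¹(−B_l Γ sin(η(t)) − P_l − u_l(t)). Let constants (η̄, ω̄_g, P̄_m, ū_l) satisfy the corresponding steady-state equations, with ω̄_l = D_l⁻¹(−B_l Γ sin(η̄) − P_l − ū_l). Then for all t: d/dt U(η(t), ω_g(t)) = −(ω_g − ω̄_g)ᵀD_g(ω_g − ω̄_g) − (ω_l − ω̄_l)ᵀD_l(ω_l − ω̄_l) + (ω_g − ω̄_g)ᵀ(P_m(t) − P̄_m) − (ω_l − ω̄_l)ᵀ(u_l(t) − ū_l); that is, the network is also output strictly incrementally cyclo-passive with respect to the additional input–output pair (u_l, −ω_l). -/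

import Mathlib

/-- Incremental cyclo-passivity of the power network with controllable loads:
the storage function `U` additionally satisfies the passivity inequality with
respect to the input–output pair `(u_l, −ω_l)`. -/
theorem incremental_passivity_load_control {m ng nl : ℕ}
    (M Dg : Fin ng → ℝ) (Dl : Fin nl → ℝ) (γ : Fin m → ℝ)
    (Bg : Matrix (Fin ng) (Fin m) ℝ) (Bl : Matrix (Fin nl) (Fin m) ℝ)
    (Pl : Fin nl → ℝ)
    (hM : ∀ i, 0 < M i) (hDg : ∀ i, 0 < Dg i) (hDl : ∀ j, 0 < Dl j)
    (hγ : ∀ k, 0 < γ k)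
    (η : ℝ → Fin m → ℝ) (ωg : ℝ → Fin ng → ℝ)
    (Pm : ℝ → Fin ng → ℝ) (ul : ℝ → Fin nl → ℝ)
    (hPmcont : Continuous Pm) (hulcont : Continuous ul)
    (ωl : ℝ → Fin nl → ℝ)
    -- ω_l = D_l⁻¹(−B_l Γ sin(η) − P_l − u_l) :
    (hωl : ∀ t j, ωl t j
      = (-(∑ k, Bl j k * (γ k * Real.sin (η t k))) - Pl j - ul t j) / Dl j)
    -- η̇ = B_gᵀ ω_g + B_lᵀ ω_l :
    (hη : ∀ t, HasDerivAt η
      (fun k => (∑ i, Bg i k * ωg t i) + ∑ j, Bl j k * ωl t j) t)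
    -- M ω̇_g = −D_g ω_g − B_g Γ sin(η) + P_m :
    (hωg : ∀ t, HasDerivAt ωg
      (fun i => (-(Dg i * ωg t i)
        - (∑ k, Bg i k * (γ k * Real.sin (η t k))) + Pm t i) / M i) t)
    (ηb : Fin m → ℝ) (ωgb : Fin ng → ℝ) (Pmb : Fin ng → ℝ)
    (ulb : Fin nl → ℝ) (ωlb : Fin nl → ℝ)
    (hωlb : ∀ j, ωlb j
      = (-(∑ k, Bl j k * (γ k * Real.sin (ηb k))) - Pl j - ulb j) / Dl j)
    -- 0 = B_gᵀ ω̄_g + B_lᵀ ω̄_l :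
    (hss1 : ∀ k, 0 = (∑ i, Bg i k * ωgb i) + ∑ j, Bl j k * ωlb j)
    -- 0 = −D_g ω̄_g − B_g Γ sin(η̄) + P̄_m :
    (hss2 : ∀ i, 0 = -(Dg i * ωgb i)
      - (∑ k, Bg i k * (γ k * Real.sin (ηb k))) + Pmb i)
    (U : (Fin m → ℝ) → (Fin ng → ℝ) → ℝ)
    (hU : ∀ e w, U e w = (1/2) * (∑ i, M i * (w i - ωgb i)^2)
      - (∑ k, γ k * Real.cos (e k)) + (∑ k, γ k * Real.cos (ηb k))
      - ∑ k, γ k * Real.sin (ηb k) * (e k - ηb k)) :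
    ∀ t, HasDerivAt (fun s => U (η s) (ωg s))
      (-(∑ i, Dg i * (ωg t i - ωgb i)^2) - (∑ j, Dl j * (ωl t j - ωlb j)^2)
        + (∑ i, (ωg t i - ωgb i) * (Pm t i - Pmb i))
        - ∑ j, (ωl t j - ωlb j) * (ul t j - ulb j)) t := by
  intro t
  set E : Fin ng → ℝ := fun i => ωg t i - ωgb i with hE
  set F : Fin nl → ℝ := fun j => ωl t j - ωlb j with hF
  set w' : Fin ng → ℝ := fun i => (-(Dg i * ωg t i)
      - (∑ k, Bg i k * (γ k * Real.sin (η t k))) + Pm t i) / M i with hw'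
  set e' : Fin m → ℝ := fun k => (∑ i, Bg i k * ωg t i) + ∑ j, Bl j k * ωl t j with he'
  have hηk : ∀ k, HasDerivAt (fun s => η s k) (e' k) t := by
    intro k
    exact (hasDerivAt_pi.mp (hη t)) k
  have hωgi : ∀ i, HasDerivAt (fun s => ωg s i) (w' i) t := by
    intro i
    exact (hasDerivAt_pi.mp (hωg t)) i
  -- derivative of the storage function written explicitly
  have hderiv : HasDerivAt (fun s => U (η s) (ωg s))
      ((1/2) * (∑ i, M i * (2 * (ωg t i - ωgb i) * w' i))
        - (∑ k, γ k * (-Real.sin (η t k) * e' k))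
        - ∑ k, γ k * Real.sin (ηb k) * e' k) t := by
    have h1 : HasDerivAt (fun s => (1/2) * (∑ i, M i * (ωg s i - ωgb i)^2))
        ((1/2) * (∑ i, M i * (2 * (ωg t i - ωgb i) * w' i))) t := by
      refine HasDerivAt.const_mul _ ?_
      refine HasDerivAt.fun_sum fun i _ => ?_
      have h := ((hωgi i).sub_const (ωgb i)).fun_pow 2
      have h2 := h.const_mul (M i)
      convert h2 using 1
      norm_num
      rfl
      norm_num
    have h2 : HasDerivAt (fun s => (∑ k, γ k * Real.cos (η s k)))
        (∑ k, γ k * (-Real.sin (η t k) * e' k)) t := by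
      refine HasDerivAt.fun_sum ?_
      intro k _
      exact ((hηk k).cos).const_mul (γ k)
    have h3 : HasDerivAt (fun s => ∑ k, γ k * Real.sin (ηb k) * (η s k - ηb k))
        (∑ k, γ k * Real.sin (ηb k) * e' k) t := by
      refine HasDerivAt.fun_sum ?_
      intro k _
      exact ((hηk k).sub_const (ηb k)).const_mul (γ k * Real.sin (ηb k))
    have := ((h1.fun_sub h2).add_const (∑ k, γ k * Real.cos (ηb k))).fun_sub h3
    have heq : (fun s => U (η s) (ωg s))
        = fun s => (1/2) * (∑ i, M i * (ωg s i - ωgb i)^2)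
          - (∑ k, γ k * Real.cos (η s k)) + (∑ k, γ k * Real.cos (ηb k))
          - ∑ k, γ k * Real.sin (ηb k) * (η s k - ηb k) := by
      funext s; exact hU (η s) (ωg s)
    rw [heq]
    convert this using 1
  -- now show the derivative value equals the claimed expression
  convert hderiv using 1
  have hMne : ∀ i, M i ≠ 0 := fun i => (hM i).ne'
  have hDlne : ∀ j, Dl j ≠ 0 := fun j => (hDl j).ne'
  have key1 : ∀ i, M i * w' i = -(Dg i * E i)
      - ((∑ k, Bg i k * (γ k * Real.sin (η t k)))
         - (∑ k, Bg i k * (γ k * Real.sin (ηb k)))) + (Pm t i - Pmb i) := by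
    intro i
    have h := hss2 i
    have hX : M i * w' i = -(Dg i * ωg t i)
        - (∑ k, Bg i k * (γ k * Real.sin (η t k))) + Pm t i := by
      rw [hw']; beta_reduce; rw [mul_div_cancel₀ _ (hMne i)]
    rw [hX]; simp only [hE]; linarith
  have key2 : ∀ k, e' k = (∑ i, Bg i k * E i) + ∑ j, Bl j k * F j := by
    intro k
    have h := hss1 k
    rw [he']
    simp only [hE, hF, mul_sub, Finset.sum_sub_distrib]
    linarith
  have key3 : ∀ j, (∑ k, Bl j k * (γ k * Real.sin (η t k)))
      - (∑ k, Bl j k * (γ k * Real.sin (ηb k)))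
      = -(Dl j * F j) - (ul t j - ulb j) := by
    intro j
    have h1 : Dl j * ωl t j = -(∑ k, Bl j k * (γ k * Real.sin (η t k))) - Pl j - ul t j := by
      rw [hωl t j]; rw [mul_div_cancel₀ _ (hDlne j)]
    have h2 : Dl j * ωlb j = -(∑ k, Bl j k * (γ k * Real.sin (ηb k))) - Pl j - ulb j := by
      rw [hωlb j]; rw [mul_div_cancel₀ _ (hDlne j)]
    simp only [hF]
    nlinarith [h1, h2]
  -- rewrite derivative value
  have hA : (1/2) * (∑ i, M i * (2 * (ωg t i - ωgb i) * w' i))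
      = ∑ i, E i * (M i * w' i) := by
    rw [Finset.mul_sum]
    exact Finset.sum_congr rfl fun i _ => by simp only [hE]; ring
  have hB : (∑ k, γ k * (-Real.sin (η t k) * e' k))
        + (∑ k, γ k * Real.sin (ηb k) * e' k)
      = -∑ k, (Real.sin (η t k) - Real.sin (ηb k)) * (γ k * e' k) := by
    rw [← Finset.sum_add_distrib, ← Finset.sum_neg_distrib]
    exact Finset.sum_congr rfl fun k _ => by ring
  have lhs_eq : (1/2) * (∑ i, M i * (2 * (ωg t i - ωgb i) * w' i))
        - (∑ k, γ k * (-Real.sin (η t k) * e' k))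
        - ∑ k, γ k * Real.sin (ηb k) * e' k
      = (∑ i, E i * (M i * w' i))
        + ∑ k, (Real.sin (η t k) - Real.sin (ηb k)) * (γ k * e' k) := by
    rw [sub_sub, hB, hA]; ring
  rw [eq_comm, lhs_eq]
  have h_i : ∀ i, E i * (M i * w' i)
      = (-(Dg i * E i ^ 2) + E i * (Pm t i - Pmb i))
        - ∑ k, E i * (Bg i k * (γ k * (Real.sin (η t k) - Real.sin (ηb k)))) := by
    intro i
    have hS : (∑ k, Bg i k * (γ k * Real.sin (η t k)))
        - (∑ k, Bg i k * (γ k * Real.sin (ηb k)))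
        = ∑ k, Bg i k * (γ k * (Real.sin (η t k) - Real.sin (ηb k))) := by
      rw [← Finset.sum_sub_distrib]
      exact Finset.sum_congr rfl fun k _ => by ring
    have hm : ∑ k, E i * (Bg i k * (γ k * (Real.sin (η t k) - Real.sin (ηb k))))
        = E i * ∑ k, Bg i k * (γ k * (Real.sin (η t k) - Real.sin (ηb k))) :=
      (Finset.mul_sum _ _ _).symm
    rw [key1 i, hS, hm]; ring
  have sum1 : (∑ i, E i * (M i * w' i))
      = (∑ i, (-(Dg i * E i ^ 2) + E i * (Pm t i - Pmb i)))
        - ∑ i, ∑ k, E i * (Bg i k * (γ k * (Real.sin (η t k) - Real.sin (ηb k)))) := by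
    rw [← Finset.sum_sub_distrib]
    exact Finset.sum_congr rfl fun i _ => h_i i
  have expand : ∀ k, (Real.sin (η t k) - Real.sin (ηb k)) * (γ k * e' k)
      = (∑ i, E i * (Bg i k * (γ k * (Real.sin (η t k) - Real.sin (ηb k)))))
        + ∑ j, F j * (Bl j k * (γ k * (Real.sin (η t k) - Real.sin (ηb k)))) := by
    intro k
    rw [key2 k, mul_add, mul_add]
    simp only [Finset.mul_sum]
    congr 1 <;> exact Finset.sum_congr rfl fun _ _ => by ring
  have split : (∑ k, (Real.sin (η t k) - Real.sin (ηb k)) * (γ k * e' k))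
      = (∑ k, ∑ i, E i * (Bg i k * (γ k * (Real.sin (η t k) - Real.sin (ηb k)))))
        + ∑ k, ∑ j, F j * (Bl j k * (γ k * (Real.sin (η t k) - Real.sin (ηb k)))) := by
    rw [← Finset.sum_add_distrib]
    exact Finset.sum_congr rfl fun k _ => expand k
  have h_j : ∀ j, (∑ k, F j * (Bl j k * (γ k * (Real.sin (η t k) - Real.sin (ηb k)))))
      = -(Dl j * F j ^ 2) - F j * (ul t j - ulb j) := by
    intro j
    have hS : (∑ k, Bl j k * (γ k * (Real.sin (η t k) - Real.sin (ηb k))))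
        = -(Dl j * F j) - (ul t j - ulb j) := by
      rw [← key3 j, ← Finset.sum_sub_distrib]
      exact Finset.sum_congr rfl fun k _ => by ring
    have hm : (∑ k, F j * (Bl j k * (γ k * (Real.sin (η t k) - Real.sin (ηb k)))))
        = F j * ∑ k, Bl j k * (γ k * (Real.sin (η t k) - Real.sin (ηb k))) :=
      (Finset.mul_sum _ _ _).symm
    rw [hm, hS]; ring
  have final : (∑ k, (Real.sin (η t k) - Real.sin (ηb k)) * (γ k * e' k))
      = (∑ i, ∑ k, E i * (Bg i k * (γ k * (Real.sin (η t k) - Real.sin (ηb k)))))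
        + ∑ j, (-(Dl j * F j ^ 2) - F j * (ul t j - ulb j)) := by
    rw [split, Finset.sum_comm]
    congr 1
    rw [Finset.sum_comm]
    exact Finset.sum_congr rfl fun j _ => h_j j
  rw [sum1, final, Finset.sum_add_distrib, Finset.sum_sub_distrib,
    Finset.sum_neg_distrib, Finset.sum_neg_distrib]
  ring
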